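/- arXiv:2102.07491 — 5 statements merged into one kernel-verified Lean document; each statement's English description precedes it below -/
import Mathlib

section
/- Envelope theorem for the expected indirect utility (equation (14) of the paper, Daly–Zachary/Danskin): fix U : Z → ℝ. Assume each coordinate map (ε, ε₀) ↦ ε z and (ε, ε₀) ↦ ε₀ is P-integrable, and that at U ties occur with probability zero: P({(ε, ε₀) : U z + ε z = U z' + ε z'}) = 0 for all z ≠ z' and P({(ε, ε₀) : U z + ε z = ε₀}) = 0 for all z. Then G is differentiable at U and its partial derivative in the direction of coordinate z equals the choice probability ∂G/∂U_z (U) = P({(ε, ε₀) : U z + ε z > ε₀ and U z + ε z > U z' + ε z' for all z' ≠ z}). -/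
open Finset MeasureTheory Real

variable {Z : Type*} [Fintype Z] [Nonempty Z] [DecidableEq Z]

/-- Equation (14), Daly–Zachary/Danskin envelope theorem: under a no-tie condition at `U`,
the expected indirect utility `G` is differentiable at `U` and its partial derivatives are the
choice probabilities. -/
theorem envelope_choice_probabilities
    (P : Measure ((Z → ℝ) × ℝ)) [IsProbabilityMeasure P]
    (hcoord : ∀ z, Integrable (fun ω : (Z → ℝ) × ℝ => ω.1 z) P)
    (hcoord0 : Integrable (fun ω : (Z → ℝ) × ℝ => ω.2) P)
    (G : (Z → ℝ) → ℝ)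
    (hGint : ∀ V : Z → ℝ,
      Integrable (fun ω : (Z → ℝ) × ℝ =>
        max (univ.sup' univ_nonempty fun z => V z + ω.1 z) ω.2) P)
    (hG : ∀ V : Z → ℝ,
      G V = ∫ ω, max (univ.sup' univ_nonempty fun z => V z + ω.1 z) ω.2 ∂P)
    (U : Z → ℝ)
    (hties : ∀ z z', z ≠ z' → P {ω | U z + ω.1 z = U z' + ω.1 z'} = 0)
    (hties0 : ∀ z, P {ω | U z + ω.1 z = ω.2} = 0) :
    ∃ L : (Z → ℝ) →L[ℝ] ℝ, HasFDerivAt G L U ∧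
      ∀ z, L (Pi.single z 1) = (P {ω | ω.2 < U z + ω.1 z ∧
        ∀ z', z' ≠ z → U z' + ω.1 z' < U z + ω.1 z}).toReal := by
  classical
  set F : (Z → ℝ) → ((Z → ℝ) × ℝ) → ℝ := fun V ω =>
    max (univ.sup' univ_nonempty fun z => V z + ω.1 z) ω.2 with hF
  -- the winning sets
  set A : Z → Set ((Z → ℝ) × ℝ) := fun z => {ω | ω.2 < U z + ω.1 z ∧
      ∀ z', z' ≠ z → U z' + ω.1 z' < U z + ω.1 z} with hA
  have hAmeas : ∀ z, MeasurableSet (A z) := by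
    intro z
    have heq : A z = {ω : (Z → ℝ) × ℝ | ω.2 < U z + ω.1 z}
        ∩ ⋂ z', ⋂ (_ : z' ≠ z), {ω : (Z → ℝ) × ℝ | U z' + ω.1 z' < U z + ω.1 z} := by
      ext ω
      simp only [hA, Set.mem_setOf_eq, Set.mem_inter_iff, Set.mem_iInter]
    rw [heq]
    refine MeasurableSet.inter ?_ ?_
    · exact measurableSet_lt measurable_snd
        (measurable_const.add (measurable_fst.eval))
    · exact MeasurableSet.iInter fun z' => MeasurableSet.iInter fun _ =>
        measurableSet_lt (measurable_const.add (measurable_fst.eval))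
          (measurable_const.add (measurable_fst.eval))
  -- A z pairwise disjoint
  have hAdisj : ∀ z z', z ≠ z' → ∀ ω, ω ∈ A z → ω ∉ A z' := by
    intro z z' hzz' ω hz hz'
    exact absurd (hz.2 z' (Ne.symm hzz')) (not_lt.2 (le_of_lt (hz'.2 z hzz')))
  -- the candidate derivative field
  set F' : ((Z → ℝ) × ℝ) → (Z → ℝ) →L[ℝ] ℝ := fun ω =>
    ∑ z, (A z).indicator (fun _ => (1 : ℝ)) ω •
      (ContinuousLinearMap.proj (R := ℝ) (φ := fun _ : Z => ℝ) z) with hF'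
  have hF'meas : AEStronglyMeasurable F' P := by
    have : StronglyMeasurable F' := by
      apply Finset.stronglyMeasurable_fun_sum
      intro z _
      exact ((measurable_const.indicator (hAmeas z)).stronglyMeasurable.smul_const _)
    exact this.aestronglyMeasurable
  -- Lipschitz with constant 1
  have hlip : ∀ ω, LipschitzWith 1 (fun x => F x ω) := by
    intro ω
    apply LipschitzWith.of_dist_le_mul
    intro x y
    rw [NNReal.coe_one, one_mul, Real.dist_eq]
    have key : ∀ a b : Z → ℝ, F a ω ≤ F b ω + dist a b := by
      intro a b
      have hd : (0 : ℝ) ≤ dist a b := dist_nonneg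
      apply max_le
      · apply Finset.sup'_le
        intro z _
        have h1 : a z ≤ b z + dist a b := by
          have := dist_le_pi_dist a b z
          have h2 : a z - b z ≤ dist a b := (le_abs_self _).trans (by rwa [Real.dist_eq] at this)
          linarith
        calc a z + ω.1 z ≤ (b z + ω.1 z) + dist a b := by linarith
          _ ≤ (univ.sup' univ_nonempty fun z => b z + ω.1 z) + dist a b := by
              have := Finset.le_sup' (f := fun z => b z + ω.1 z) (Finset.mem_univ z)
              linarith
          _ ≤ F b ω + dist a b := by
              have := le_max_left (univ.sup' univ_nonempty fun z => b z + ω.1 z) ω.2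
              linarith
      · have := le_max_right (univ.sup' univ_nonempty fun z => b z + ω.1 z) ω.2
        show ω.2 ≤ F b ω + dist a b
        linarith
    have h1 := key x y
    have h2 := key y x
    rw [dist_comm] at h2
    rw [abs_sub_le_iff]
    constructor <;> linarith
  -- almost everywhere differentiability
  have hBset : P ((⋃ z, A z) ∪ {ω | ∀ z, U z + ω.1 z < ω.2})ᶜ = 0 := by
    have hnull : P ((⋃ z, ⋃ z', ⋃ (_ : z ≠ z'),
        {ω : (Z → ℝ) × ℝ | U z + ω.1 z = U z' + ω.1 z'})
        ∪ ⋃ z, {ω : (Z → ℝ) × ℝ | U z + ω.1 z = ω.2}) = 0 := by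
      apply measure_union_null
      · refine measure_iUnion_null fun z => measure_iUnion_null fun z' =>
          measure_iUnion_null fun h => hties z z' h
      · exact measure_iUnion_null hties0
    apply measure_mono_null _ hnull
    intro ω hω
    rw [Set.mem_compl_iff, Set.mem_union, not_or] at hω
    obtain ⟨hnA, hnB⟩ := hω
    have hnA' : ∀ z, ω ∉ A z := fun z hz => hnA (Set.mem_iUnion.2 ⟨z, hz⟩)
    simp only [Set.mem_setOf_eq] at hnB
    push_neg at hnB
    obtain ⟨z₀, hz₀⟩ := hnB
    obtain ⟨zs, _, hzs⟩ := Finset.exists_max_image (univ : Finset Z)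
      (fun z => U z + ω.1 z) ⟨Classical.arbitrary Z, Finset.mem_univ _⟩
    have hωA := hnA' zs
    simp only [hA, Set.mem_setOf_eq, not_and, not_forall, not_lt] at hωA
    by_cases h2 : ω.2 < U zs + ω.1 zs
    · obtain ⟨z', hz', hle⟩ := hωA h2
      have heq : U zs + ω.1 zs = U z' + ω.1 z' :=
        le_antisymm hle (hzs z' (Finset.mem_univ _))
      apply Set.mem_union_left
      exact Set.mem_iUnion.2 ⟨zs, Set.mem_iUnion.2 ⟨z', Set.mem_iUnion.2 ⟨Ne.symm hz', heq⟩⟩⟩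
    · apply Set.mem_union_right
      exact Set.mem_iUnion.2 ⟨zs, le_antisymm (not_lt.1 h2)
        (le_trans hz₀ (hzs z₀ (Finset.mem_univ _)))⟩
  have hdiff : ∀ᵐ ω ∂P, HasFDerivAt (fun x => F x ω) (F' ω) U := by
    rw [MeasureTheory.ae_iff]
    apply measure_mono_null _ hBset
    intro ω hω
    simp only [Set.mem_setOf_eq] at hω
    simp only [Set.mem_compl_iff, Set.mem_union, Set.mem_iUnion, not_or, Set.mem_setOf_eq,
      not_exists]
    constructor
    · intro z hz
      apply hω
      -- ω ∈ A z, show differentiability with derivative proj z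
      have hF'eq : F' ω = ContinuousLinearMap.proj (R := ℝ) (φ := fun _ : Z => ℝ) z := by
        simp only [hF']
        rw [Finset.sum_eq_single z]
        · rw [Set.indicator_of_mem hz, one_smul]
        · intro z' _ hz'
          rw [Set.indicator_of_notMem (hAdisj z z' (Ne.symm hz') ω hz), zero_smul]
        · intro h; exact absurd (Finset.mem_univ z) h
      rw [hF'eq]
      have hloc : ∀ᶠ x in nhds U, F x ω = x z + ω.1 z := by
        have h1 : ∀ᶠ x in nhds U, ω.2 < x z + ω.1 z := by
          have hc : ContinuousAt (fun x : Z → ℝ => x z + ω.1 z) U :=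
            ((continuous_apply z).add continuous_const).continuousAt
          exact continuousAt_const.eventually_lt hc hz.1
        have h2 : ∀ᶠ x in nhds U, ∀ z', z' ≠ z → x z' + ω.1 z' < x z + ω.1 z := by
          rw [Filter.eventually_all]
          intro z'
          by_cases hzz : z' = z
          · simp [hzz]
          · have hc1 : ContinuousAt (fun x : Z → ℝ => x z' + ω.1 z') U :=
              ((continuous_apply z').add continuous_const).continuousAt
            have hc2 : ContinuousAt (fun x : Z → ℝ => x z + ω.1 z) U :=
              ((continuous_apply z).add continuous_const).continuousAt
            filter_upwards [hc1.eventually_lt hc2 (hz.2 z' hzz)] with x hx _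
            exact hx
        filter_upwards [h1, h2] with x hx1 hx2
        simp only [hF]
        have hsup : (univ.sup' univ_nonempty fun z' => x z' + ω.1 z') = x z + ω.1 z := by
          apply le_antisymm
          · apply Finset.sup'_le
            intro z' _
            by_cases hzz : z' = z
            · subst hzz; exact le_rfl
            · exact le_of_lt (hx2 z' hzz)
          · exact Finset.le_sup' (f := fun z' => x z' + ω.1 z') (Finset.mem_univ z)
        rw [hsup, max_eq_left (le_of_lt hx1)]
      have hbase : HasFDerivAt (fun x : Z → ℝ => x z + ω.1 z)
          (ContinuousLinearMap.proj (R := ℝ) (φ := fun _ : Z => ℝ) z) U :=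
        (ContinuousLinearMap.proj (R := ℝ) (φ := fun _ : Z => ℝ) z).hasFDerivAt.add_const (ω.1 z)
      exact hbase.congr_of_eventuallyEq hloc
    · intro hB
      apply hω
      -- outside option wins
      have hF'eq : F' ω = 0 := by
        simp only [hF']
        apply Finset.sum_eq_zero
        intro z _
        have : ω ∉ A z := by
          intro hmem
          exact absurd hmem.1 (not_lt.2 (le_of_lt (hB z)))
        rw [Set.indicator_of_notMem this, zero_smul]
      rw [hF'eq]
      have hloc : ∀ᶠ x in nhds U, F x ω = ω.2 := by
        have h2 : ∀ᶠ x in nhds U, ∀ z, x z + ω.1 z < ω.2 := by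
          rw [Filter.eventually_all]
          intro z
          have hc : ContinuousAt (fun x : Z → ℝ => x z + ω.1 z) U :=
            ((continuous_apply z).add continuous_const).continuousAt
          exact hc.eventually_lt continuousAt_const (hB z)
        filter_upwards [h2] with x hx
        simp only [hF]
        apply max_eq_right
        apply le_of_lt
        apply (Finset.sup'_lt_iff _).2
        intro z _
        exact hx z
      exact (hasFDerivAt_const ω.2 U).congr_of_eventuallyEq hloc
  -- apply the parametric integral theorem
  have main := hasFDerivAt_integral_of_dominated_loc_of_lip (μ := P) (F := F) (F' := F')
    (x₀ := U) (bound := fun _ => 1) (s := Metric.ball U 1) (Metric.ball_mem_nhds U one_pos)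
    (Filter.Eventually.of_forall fun x => (hGint x).aestronglyMeasurable)
    (hGint U) hF'meas
    (Filter.Eventually.of_forall fun ω => by
      have h1 : Real.nnabs (1 : ℝ) = 1 := by simp
      rw [h1]
      exact (hlip ω).lipschitzOnWith)
    (integrable_const 1) hdiff
  obtain ⟨hF'int, hder⟩ := main
  refine ⟨∫ ω, F' ω ∂P, ?_, ?_⟩
  · have : G = fun x => ∫ ω, F x ω ∂P := funext hG
    rw [this]
    exact hder
  · intro z
    rw [ContinuousLinearMap.integral_apply hF'int]
    have hptwise : ∀ ω, (F' ω) (Pi.single z 1) = (A z).indicator (fun _ => (1 : ℝ)) ω := by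
      intro ω
      simp only [hF', ContinuousLinearMap.sum_apply]
      rw [Finset.sum_eq_single z]
      · simp
      · intro z' _ hz'
        simp [Pi.single_apply, hz']
      · intro h; exact absurd (Finset.mem_univ z) h
    simp_rw [hptwise]
    rw [MeasureTheory.integral_indicator_const (1 : ℝ) (hAmeas z), smul_eq_mul, mul_one]
    rfl
end

section
/- Gumbel log-sum-exp formula: let P = ⨂_{z ∈ Z} ν be the product measure on Z → ℝ of |Z| independent standard Gumbel distributions. Then for every U : Z → ℝ, the expectation of the maximum satisfies ∫ max_z (U z + ε z) dP(ε) = log(∑_z exp (U z)) + γ, where γ is the Euler–Mascheroni constant. -/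
open Finset MeasureTheory Real

section GumbelAux

open Set
open scoped NNReal ENNReal


lemma abs_log_le (t : ℝ) (ht : 0 < t) :
    |Real.log t| ≤ 2 * t ^ ((1:ℝ)/2) + 2 * t ^ (-(1:ℝ)/2) := by
  have h1 : ∀ s : ℝ, 0 < s → Real.log s ≤ 2 * s ^ ((1:ℝ)/2) := by
    intro s hs
    have : Real.log s = 2 * Real.log (s ^ ((1:ℝ)/2)) := by
      rw [Real.log_rpow hs]; ring
    rw [this]
    have := Real.log_le_sub_one_of_pos (Real.rpow_pos_of_pos hs ((1:ℝ)/2))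
    nlinarith [Real.rpow_pos_of_pos hs ((1:ℝ)/2)]
  rcases abs_cases (Real.log t) with ⟨he, _⟩ | ⟨he, _⟩
  · rw [he]
    have := h1 t ht
    have h2 : (0:ℝ) ≤ 2 * t ^ (-(1:ℝ)/2) := by positivity
    linarith
  · rw [he, ← Real.log_inv]
    have := h1 t⁻¹ (by positivity)
    have h2 : (0:ℝ) ≤ 2 * t ^ ((1:ℝ)/2) := by positivity
    have h3 : t⁻¹ ^ ((1:ℝ)/2) = t ^ (-(1:ℝ)/2) := by
      rw [Real.inv_rpow ht.le, ← Real.rpow_neg ht.le]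
      norm_num
    rw [h3] at this
    linarith

lemma integrableOn_log_mul_exp :
    IntegrableOn (fun t : ℝ => Real.log t * Real.exp (-t)) (Ioi 0) := by
  have h1 : IntegrableOn (fun t : ℝ => Real.exp (-t) * t ^ ((1:ℝ)/2 - 1)) (Ioi 0) :=
    Real.GammaIntegral_convergent (by norm_num : (0:ℝ) < 1/2)
  have h2 : IntegrableOn (fun t : ℝ => Real.exp (-t) * t ^ ((3:ℝ)/2 - 1)) (Ioi 0) :=
    Real.GammaIntegral_convergent (by norm_num : (0:ℝ) < 3/2)
  have hbound : IntegrableOn (fun t : ℝ =>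
      2 * (Real.exp (-t) * t ^ ((3:ℝ)/2 - 1)) + 2 * (Real.exp (-t) * t ^ ((1:ℝ)/2 - 1)))
      (Ioi 0) := (h2.const_mul 2).add (h1.const_mul 2)
  refine Integrable.mono hbound ?_ ?_
  · exact (Real.measurable_log.mul (by fun_prop)).aestronglyMeasurable
  · filter_upwards [ae_restrict_mem measurableSet_Ioi] with t ht
    have ht' : (0:ℝ) < t := ht
    have h3 := abs_log_le t ht'
    have he : (0:ℝ) < Real.exp (-t) := Real.exp_pos _
    have hb : |Real.log t * Real.exp (-t)| ≤
        (2 * t ^ ((1:ℝ)/2) + 2 * t ^ (-(1:ℝ)/2)) * Real.exp (-t) := by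
      rw [abs_mul, abs_of_pos he]
      exact mul_le_mul_of_nonneg_right h3 he.le
    rw [Real.norm_eq_abs, Real.norm_eq_abs]
    refine hb.trans (le_of_eq ?_)
    have : ((3:ℝ)/2 - 1) = (1:ℝ)/2 := by norm_num
    rw [this]
    have : ((1:ℝ)/2 - 1) = -(1:ℝ)/2 := by norm_num
    rw [this]
    rw [abs_of_nonneg (by positivity)]
    ring

lemma integral_log_mul_exp :
    ∫ t in Ioi (0:ℝ), Real.log t * Real.exp (-t) = -Real.eulerMascheroniConstant := by
  have key : HasDerivAt Complex.GammaIntegral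
      (∫ t : ℝ in Ioi 0, (t:ℂ) ^ ((1:ℂ) - 1) * (Real.log t * Real.exp (-t))) 1 :=
    Complex.hasDerivAt_GammaIntegral (by norm_num)
  have heq : (∫ t : ℝ in Ioi 0, (t:ℂ) ^ ((1:ℂ) - 1) * (Real.log t * Real.exp (-t)))
      = (∫ t : ℝ in Ioi 0, ((Real.log t * Real.exp (-t) : ℝ) : ℂ)) := by
    refine setIntegral_congr_fun measurableSet_Ioi fun t ht => ?_
    have h0 : ((1:ℂ) - 1) = 0 := by ring
    rw [h0, Complex.cpow_zero, one_mul]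
    push_cast
    ring
  rw [heq] at key
  rw [show (∫ t : ℝ in Ioi 0, ((Real.log t * Real.exp (-t) : ℝ) : ℂ))
      = ((∫ t : ℝ in Ioi 0, Real.log t * Real.exp (-t) : ℝ) : ℂ) from integral_ofReal] at key
  have key2 : HasDerivAt Complex.Gamma
      ((∫ t : ℝ in Ioi 0, Real.log t * Real.exp (-t) : ℝ) : ℂ) 1 := by
    refine key.congr_of_eventuallyEq ?_
    have hopen : IsOpen {s : ℂ | 0 < s.re} := isOpen_lt continuous_const Complex.continuous_re
    filter_upwards [hopen.mem_nhds (by norm_num : (0:ℝ) < (1:ℂ).re)] with s hs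
    exact Complex.Gamma_eq_integral hs
  have key3 : HasDerivAt Real.Gamma (∫ t : ℝ in Ioi 0, Real.log t * Real.exp (-t)) 1 := by
    have := key2.real_of_complex
    simpa [Complex.Gamma_ofReal] using this
  exact key3.unique Real.hasDerivAt_Gamma_one


noncomputable def epdf (u : ℝ) : ℝ := if 0 < u then Real.exp (-u) else 0

lemma epdf_nonneg (u : ℝ) : 0 ≤ epdf u := by
  unfold epdf; split <;> positivity

lemma measurable_epdf : Measurable epdf :=
  Measurable.ite measurableSet_Ioi (by fun_prop) measurable_const

noncomputable def Emeas : Measure ℝ := volume.withDensity fun u => ENNReal.ofReal (epdf u)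

lemma epdf_indicator (u : ℝ) : ENNReal.ofReal (epdf u)
    = Set.indicator (Ioi 0) (fun u => ENNReal.ofReal (Real.exp (-u))) u := by
  unfold epdf
  by_cases h : 0 < u
  · rw [Set.indicator_of_mem (Set.mem_Ioi.mpr h), if_pos h]
  · rw [Set.indicator_of_notMem (fun hm => h (Set.mem_Ioi.mp hm)), if_neg h,
      ENNReal.ofReal_zero]

lemma Emeas_apply {s : Set ℝ} (hs : MeasurableSet s) :
    Emeas s = ∫⁻ u in s ∩ Ioi 0, ENNReal.ofReal (Real.exp (-u)) := by
  rw [Emeas, withDensity_apply _ hs]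
  simp_rw [epdf_indicator]
  rw [lintegral_indicator measurableSet_Ioi, Measure.restrict_restrict measurableSet_Ioi,
    Set.inter_comm]

lemma lintegral_exp_neg_Ici (a : ℝ) :
    ∫⁻ u in Ici a, ENNReal.ofReal (Real.exp (-u)) = ENNReal.ofReal (Real.exp (-a)) := by
  rw [setLIntegral_congr Ioi_ae_eq_Ici.symm]
  rw [← ofReal_integral_eq_lintegral_ofReal
      (by simpa [IntegrableOn] using exp_neg_integrableOn_Ioi a (by norm_num : (0:ℝ) < 1))
      (Filter.Eventually.of_forall fun u => (Real.exp_pos _).le)]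
  rw [integral_exp_neg_Ioi]

instance : IsProbabilityMeasure Emeas := by
  constructor
  rw [Emeas_apply MeasurableSet.univ, Set.univ_inter]
  have h : Ioi (0:ℝ) =ᵐ[volume] Ici (0:ℝ) := Ioi_ae_eq_Ici
  rw [setLIntegral_congr h, lintegral_exp_neg_Ici 0]
  simp

noncomputable def mlog (u : ℝ) : ℝ := -Real.log u

lemma measurable_mlog : Measurable mlog := Real.measurable_log.neg

lemma mlog_preim_inter (t : ℝ) : mlog ⁻¹' Iic t ∩ Ioi 0 = Ici (Real.exp (-t)) := by
  ext u
  simp only [Set.mem_inter_iff, Set.mem_preimage, Set.mem_Iic, Set.mem_Ioi, Set.mem_Ici, mlog]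
  constructor
  · rintro ⟨h1, h2⟩
    have : -t ≤ Real.log u := by linarith
    calc Real.exp (-t) ≤ Real.exp (Real.log u) := Real.exp_le_exp.2 this
    _ = u := Real.exp_log h2
  · intro h
    have hu : 0 < u := lt_of_lt_of_le (Real.exp_pos _) h
    have := Real.log_le_log (Real.exp_pos _) h
    rw [Real.log_exp] at this
    exact ⟨by linarith, hu⟩

lemma Emeas_map_Iic (t : ℝ) :
    Emeas.map mlog (Iic t) = ENNReal.ofReal (Real.exp (-Real.exp (-t))) := by
  rw [Measure.map_apply measurable_mlog measurableSet_Iic,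
    Emeas_apply (measurable_mlog measurableSet_Iic), mlog_preim_inter,
    lintegral_exp_neg_Ici]

lemma integrable_mlog_Emeas : Integrable mlog Emeas := by
  rw [Emeas, integrable_withDensity_iff (measurable_epdf.ennreal_ofReal)
    (Filter.Eventually.of_forall fun x => ENNReal.ofReal_lt_top)]
  have : (fun x => mlog x * (ENNReal.ofReal (epdf x)).toReal)
      = Set.indicator (Ioi 0) (fun u => -(Real.log u * Real.exp (-u))) := by
    funext u
    rw [ENNReal.toReal_ofReal (epdf_nonneg u)]
    by_cases h : 0 < u
    · rw [Set.indicator_of_mem (Set.mem_Ioi.mpr h)]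
      unfold mlog epdf
      rw [if_pos h]; ring
    · rw [Set.indicator_of_notMem (fun hm => h (Set.mem_Ioi.mp hm))]
      unfold epdf
      rw [if_neg h, mul_zero]
  rw [this, integrable_indicator_iff measurableSet_Ioi]
  exact integrableOn_log_mul_exp.neg

lemma integral_mlog_Emeas : ∫ u, mlog u ∂Emeas = Real.eulerMascheroniConstant := by
  have hrw : Emeas = volume.withDensity fun u => ((Real.toNNReal (epdf u) : ℝ≥0) : ℝ≥0∞) := rfl
  rw [hrw, integral_withDensity_eq_integral_smul measurable_epdf.real_toNNReal]
  have : (fun u => Real.toNNReal (epdf u) • mlog u)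
      = Set.indicator (Ioi 0) (fun u => -(Real.log u * Real.exp (-u))) := by
    funext u
    rw [NNReal.smul_def, smul_eq_mul, Real.coe_toNNReal _ (epdf_nonneg u)]
    by_cases h : 0 < u
    · rw [Set.indicator_of_mem (Set.mem_Ioi.mpr h)]; unfold mlog epdf; rw [if_pos h]; ring
    · rw [Set.indicator_of_notMem (fun hm => h (Set.mem_Ioi.mp hm))]; unfold epdf
      rw [if_neg h, zero_mul]
  rw [this, integral_indicator measurableSet_Ioi, integral_neg, integral_log_mul_exp, neg_neg]

end GumbelAux

open Finset MeasureTheory Real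

variable {Z : Type*} [Fintype Z] [Nonempty Z]

/-- Gumbel log-sum-exp formula: the expectation of the maximum of Gumbel-perturbed utilities
is the log-sum-exp plus the Euler–Mascheroni constant. -/
theorem gumbel_logsumexp
    (ν : Measure ℝ) [IsProbabilityMeasure ν]
    (hcdf : ∀ t : ℝ, ν (Set.Iic t) = ENNReal.ofReal (Real.exp (-Real.exp (-t))))
    (U : Z → ℝ) :
    ∫ ε : Z → ℝ, univ.sup' univ_nonempty (fun z => U z + ε z)
        ∂(Measure.pi fun _ : Z => ν) =
      Real.log (∑ z, Real.exp (U z)) + Real.eulerMascheroniConstant := by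
  set c : ℝ := Real.log (∑ z, Real.exp (U z)) with hc
  have hsum : 0 < ∑ z, Real.exp (U z) :=
    Finset.sum_pos (fun z _ => Real.exp_pos _) univ_nonempty
  have hexpc : Real.exp c = ∑ z, Real.exp (U z) := Real.exp_log hsum
  haveI : IsProbabilityMeasure (Emeas.map mlog) :=
    Measure.isProbabilityMeasure_map measurable_mlog.aemeasurable
  have hν : ν = Emeas.map mlog := by
    refine (Measure.ext_of_Iic (Emeas.map mlog) ν fun t => ?_).symm
    rw [Emeas_map_Iic, hcdf]
  have hintν : Integrable (fun x : ℝ => x) ν := by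
    rw [hν]
    exact (integrable_map_measure aestronglyMeasurable_id
      measurable_mlog.aemeasurable).mpr integrable_mlog_Emeas
  have hmeanν : ∫ x, x ∂ν = Real.eulerMascheroniConstant := by
    rw [hν]
    rw [show (∫ x, x ∂(Emeas.map mlog)) = ∫ u, mlog u ∂Emeas from
      integral_map measurable_mlog.aemeasurable aestronglyMeasurable_id]
    exact integral_mlog_Emeas
  set M : (Z → ℝ) → ℝ := fun ε => univ.sup' univ_nonempty (fun z => U z + ε z) with hMdef
  have hM : Measurable M := by
    have h := Finset.measurable_sup' (univ_nonempty (α := Z))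
      (f := fun z (ε : Z → ℝ) => U z + ε z)
      (fun z _ => (measurable_const.add (measurable_pi_apply z)))
    have heq : M = univ.sup' univ_nonempty (fun z (ε : Z → ℝ) => U z + ε z) := by
      funext ε
      simp [hMdef, Finset.sup'_apply]
    rw [heq]; exact h
  set P : Measure (Z → ℝ) := Measure.pi fun _ : Z => ν with hP
  have hpre : ∀ t : ℝ, M ⁻¹' Set.Iic t = Set.pi Set.univ (fun z => Set.Iic (t - U z)) := by
    intro t
    ext ε
    simp only [Set.mem_preimage, Set.mem_Iic, Set.mem_pi, Set.mem_univ, forall_true_left,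
      hMdef, Finset.sup'_le_iff, Finset.mem_univ, true_implies]
    constructor
    · intro h z; have := h z; linarith [this]
    · intro h z; have := h z; linarith [this]
  haveI : IsProbabilityMeasure (P.map M) := Measure.isProbabilityMeasure_map hM.aemeasurable
  have hmapP : P.map M = ν.map (fun x => x + c) := by
    refine Measure.ext_of_Iic _ _ fun t => ?_
    rw [Measure.map_apply hM measurableSet_Iic, hpre, hP, Measure.pi_pi,
      Measure.map_apply (measurable_add_const c) measurableSet_Iic]
    have hpre2 : (fun x : ℝ => x + c) ⁻¹' Set.Iic t = Set.Iic (t - c) := by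
      ext x; simp only [Set.mem_preimage, Set.mem_Iic]; constructor <;> intro <;> linarith
    rw [hpre2, hcdf]
    simp_rw [hcdf]
    rw [← ENNReal.ofReal_prod_of_nonneg (fun z _ => (Real.exp_pos _).le)]
    congr 1
    rw [← Real.exp_sum]
    congr 1
    have hstep : ∀ z : Z, -Real.exp (-(t - U z)) = -(Real.exp (U z) * Real.exp (-t)) := by
      intro z; rw [← Real.exp_add]; ring_nf
    rw [Finset.sum_congr rfl (fun z _ => hstep z), Finset.sum_neg_distrib,
      ← Finset.sum_mul, ← hexpc, ← Real.exp_add]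
    congr 1
    ring_nf
  calc ∫ ε, M ε ∂P = ∫ x, x ∂(P.map M) := by
        rw [show (∫ x, x ∂(P.map M)) = ∫ ε, M ε ∂P from
          integral_map hM.aemeasurable aestronglyMeasurable_id]
    _ = ∫ x, x ∂(ν.map (fun x => x + c)) := by rw [hmapP]
    _ = ∫ x, (x + c) ∂ν := by
        rw [show (∫ x, x ∂(ν.map (fun x => x + c))) = ∫ x, (x + c) ∂ν from
          integral_map (measurable_add_const c).aemeasurable aestronglyMeasurable_id]
    _ = (∫ x, x ∂ν) + ∫ _, c ∂ν := integral_add hintν (integrable_const c)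
    _ = Real.eulerMascheroniConstant + c := by
        rw [hmeanν, integral_const]
        simp
    _ = c + Real.eulerMascheroniConstant := add_comm _ _
end

section
/- Logit choice probabilities: let P = ⨂_{z ∈ Z} ν be the product measure on Z → ℝ of |Z| independent standard Gumbel distributions. Then for every U : Z → ℝ and every z ∈ Z, P({ε : U z + ε z > U z' + ε z' for all z' ≠ z}) = exp(U z) / ∑_{z'} exp(U z'). -/
open Finset MeasureTheory Real

open Set

noncomputable def gumbelInv : ℝ → ℝ := fun u => -Real.log (-Real.log u)

lemma gumbelInv_measurable : Measurable gumbelInv :=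
  (Real.measurable_log.comp Real.measurable_log.neg).neg

lemma gumbel_eq_map (ν : Measure ℝ) [IsProbabilityMeasure ν]
    (hcdf : ∀ t : ℝ, ν (Set.Iic t) = ENNReal.ofReal (Real.exp (-Real.exp (-t)))) :
    ν = Measure.map gumbelInv (volume.restrict (Ioo (0:ℝ) 1)) := by
  refine Measure.ext_of_Iic _ _ (fun a => ?_)
  rw [hcdf, Measure.map_apply gumbelInv_measurable measurableSet_Iic,
    Measure.restrict_apply (gumbelInv_measurable measurableSet_Iic)]
  have hb0 : (0:ℝ) < Real.exp (-Real.exp (-a)) := Real.exp_pos _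
  have hb1 : Real.exp (-Real.exp (-a)) < 1 :=
    Real.exp_lt_one_iff.2 (neg_neg_iff_pos.2 (Real.exp_pos _))
  have hset : gumbelInv ⁻¹' Iic a ∩ Ioo (0:ℝ) 1 = Ioc 0 (Real.exp (-Real.exp (-a))) := by
    ext u
    simp only [Set.mem_inter_iff, Set.mem_preimage, Set.mem_Iic, Set.mem_Ioo, Set.mem_Ioc, gumbelInv]
    constructor
    · rintro ⟨h1, hu0, hu1⟩
      have hlu : 0 < -Real.log u := by
        have := Real.log_neg hu0 hu1; linarith
      have h2 : -a ≤ Real.log (-Real.log u) := by linarith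
      have h3 : Real.exp (-a) ≤ -Real.log u := (Real.le_log_iff_exp_le hlu).1 h2
      exact ⟨hu0, (Real.log_le_iff_le_exp hu0).1 (by linarith)⟩
    · rintro ⟨hu0, hub⟩
      have hu1 : u < 1 := lt_of_le_of_lt hub hb1
      have hlu : 0 < -Real.log u := by
        have := Real.log_neg hu0 hu1; linarith
      have h3 : Real.log u ≤ -Real.exp (-a) := by
        have := (Real.log_le_iff_le_exp hu0).2 hub
        calc Real.log u ≤ Real.log (Real.exp (-Real.exp (-a))) :=
              Real.log_le_log hu0 hub
          _ = -Real.exp (-a) := Real.log_exp _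
      have h4 : Real.exp (-a) ≤ -Real.log u := by linarith
      have h5 : -a ≤ Real.log (-Real.log u) := (Real.le_log_iff_exp_le hlu).2 h4
      exact ⟨by linarith, hu0, hu1⟩
  rw [hset, Real.volume_Ioc, sub_zero]

lemma gumbel_Iio (ν : Measure ℝ) [IsProbabilityMeasure ν]
    (hcdf : ∀ t : ℝ, ν (Set.Iic t) = ENNReal.ofReal (Real.exp (-Real.exp (-t))))
    (a : ℝ) : ν (Iio a) = ENNReal.ofReal (Real.exp (-Real.exp (-a))) := by
  rw [gumbel_eq_map ν hcdf,
    Measure.map_apply gumbelInv_measurable measurableSet_Iio,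
    Measure.restrict_apply (gumbelInv_measurable measurableSet_Iio)]
  have hb0 : (0:ℝ) < Real.exp (-Real.exp (-a)) := Real.exp_pos _
  have hb1 : Real.exp (-Real.exp (-a)) < 1 :=
    Real.exp_lt_one_iff.2 (neg_neg_iff_pos.2 (Real.exp_pos _))
  have hset : gumbelInv ⁻¹' Iio a ∩ Ioo (0:ℝ) 1 = Ioo 0 (Real.exp (-Real.exp (-a))) := by
    ext u
    simp only [Set.mem_inter_iff, Set.mem_preimage, Set.mem_Iio, Set.mem_Ioo, gumbelInv]
    constructor
    · rintro ⟨h1, hu0, hu1⟩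
      have hlu : 0 < -Real.log u := by
        have := Real.log_neg hu0 hu1; linarith
      have h2 : -a < Real.log (-Real.log u) := by linarith
      have h3 : Real.exp (-a) < -Real.log u := (Real.lt_log_iff_exp_lt hlu).1 h2
      exact ⟨hu0, (Real.log_lt_iff_lt_exp hu0).1 (by linarith)⟩
    · rintro ⟨hu0, hub⟩
      have hu1 : u < 1 := lt_trans hub hb1
      have hlu : 0 < -Real.log u := by
        have := Real.log_neg hu0 hu1; linarith
      have h3 : Real.log u < -Real.exp (-a) := by
        calc Real.log u < Real.log (Real.exp (-Real.exp (-a))) :=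
              Real.log_lt_log hu0 hub
          _ = -Real.exp (-a) := Real.log_exp _
      have h4 : Real.exp (-a) < -Real.log u := by linarith
      have h5 : -a < Real.log (-Real.log u) := (Real.lt_log_iff_exp_lt hlu).2 h4
      exact ⟨by linarith, hu0, hu1⟩
  rw [hset, Real.volume_Ioo, sub_zero]

lemma gumbel_lintegral (ν : Measure ℝ) [IsProbabilityMeasure ν]
    (hcdf : ∀ t : ℝ, ν (Set.Iic t) = ENNReal.ofReal (Real.exp (-Real.exp (-t))))
    (c : ℝ) (hc : 0 ≤ c) :
    ∫⁻ t, ENNReal.ofReal (Real.exp (-(c * Real.exp (-t)))) ∂ν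
      = ENNReal.ofReal (1 / (c + 1)) := by
  have hf : Measurable fun t : ℝ => ENNReal.ofReal (Real.exp (-(c * Real.exp (-t)))) := by
    fun_prop
  rw [gumbel_eq_map ν hcdf, lintegral_map hf gumbelInv_measurable]
  have heq : ∀ᵐ u ∂(volume : Measure ℝ), u ∈ Ioo (0:ℝ) 1 →
      ENNReal.ofReal (Real.exp (-(c * Real.exp (-gumbelInv u)))) = ENNReal.ofReal (u ^ c) := by
    refine ae_of_all _ (fun u hu => ?_)
    obtain ⟨hu0, hu1⟩ := hu
    have hlu : 0 < -Real.log u := by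
      have := Real.log_neg hu0 hu1; linarith
    have h1 : Real.exp (-gumbelInv u) = -Real.log u := by
      rw [gumbelInv, neg_neg, Real.exp_log hlu]
    rw [h1, Real.rpow_def_of_pos hu0]
    ring_nf
  calc ∫⁻ u, ENNReal.ofReal (Real.exp (-(c * Real.exp (-gumbelInv u))))
        ∂(volume.restrict (Ioo (0:ℝ) 1))
      = ∫⁻ u in Ioo (0:ℝ) 1, ENNReal.ofReal (u ^ c) := by
        exact setLIntegral_congr_fun_ae measurableSet_Ioo heq
    _ = ENNReal.ofReal (∫ u in Ioo (0:ℝ) 1, u ^ c) := by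
        rw [← ofReal_integral_eq_lintegral_ofReal]
        · have : IntervalIntegrable (fun u : ℝ => u ^ c) volume 0 1 :=
            intervalIntegral.intervalIntegrable_rpow (by left; linarith)
          have h2 : IntegrableOn (fun u : ℝ => u ^ c) (Ioc 0 1) volume := by
            simpa [intervalIntegrable_iff_integrableOn_Ioc_of_le zero_le_one] using this
          exact h2.mono_set Ioo_subset_Ioc_self
        · exact (ae_restrict_iff' measurableSet_Ioo).2
            (ae_of_all _ fun u hu => Real.rpow_nonneg hu.1.le c)
    _ = ENNReal.ofReal (1 / (c + 1)) := by
        rw [← MeasureTheory.integral_Ioc_eq_integral_Ioo,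
          ← intervalIntegral.integral_of_le zero_le_one,
          integral_rpow (Or.inl (by linarith))]
        rw [Real.one_rpow, Real.zero_rpow (by linarith)]
        norm_num

variable {Z : Type*} [Fintype Z] [Nonempty Z]

/-- Logit choice probabilities from i.i.d. standard Gumbel shocks. -/
theorem gumbel_logit_choice_probabilities
    (ν : Measure ℝ) [IsProbabilityMeasure ν]
    (hcdf : ∀ t : ℝ, ν (Set.Iic t) = ENNReal.ofReal (Real.exp (-Real.exp (-t))))
    (U : Z → ℝ) (z : Z) :
    (Measure.pi fun _ : Z => ν)
        {ε : Z → ℝ | ∀ z', z' ≠ z → U z' + ε z' < U z + ε z} =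
      ENNReal.ofReal (Real.exp (U z) / ∑ z', Real.exp (U z')) := by
  classical
  set c : ℝ := ∑ z' ∈ univ.erase z, Real.exp (U z' - U z) with hc_def
  have hc0 : 0 ≤ c := Finset.sum_nonneg fun _ _ => (Real.exp_pos _).le
  set p : Z → Prop := fun z' => z' ≠ z with hp
  have hzp : ¬ p z := fun h => h rfl
  haveI huniq : Unique {i // ¬ p i} :=
    ⟨⟨⟨z, hzp⟩⟩, fun a => Subtype.ext (not_not.1 a.2)⟩
  set S : Set (Z → ℝ) := {ε : Z → ℝ | ∀ z', z' ≠ z → U z' + ε z' < U z + ε z} with hS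
  have hSm : MeasurableSet S := by
    have : S = ⋂ (z' : Z) (_ : z' ≠ z), {ε : Z → ℝ | U z' + ε z' < U z + ε z} := by
      ext ε; simp [hS]
    rw [this]
    refine MeasurableSet.iInter fun z' => MeasurableSet.iInter fun _ => ?_
    exact measurableSet_lt (measurable_const.add (measurable_pi_apply z'))
      (measurable_const.add (measurable_pi_apply z))
  set e := MeasurableEquiv.piEquivPiSubtypeProd (fun _ : Z => ℝ) p with he
  have happ : ∀ (x : {i // p i} → ℝ) (η : {i // ¬ p i} → ℝ) (i : Z),
      e.symm (x, η) i = if h : p i then x ⟨i, h⟩ else η ⟨i, h⟩ := fun _ _ _ => rfl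
  have hmp := (measurePreserving_piEquivPiSubtypeProd (fun _ : Z => ν) p).symm e
  have key := hmp.measure_preimage hSm.nullMeasurableSet
  have hsec : ∀ y : {i // ¬ p i} → ℝ,
      ((fun x => (x, y)) ⁻¹' (e.symm ⁻¹' S)) =
        Set.pi Set.univ (fun i : {i // p i} => Set.Iio (U z + y ⟨z, hzp⟩ - U i.1)) := by
    intro y
    ext x
    simp only [Set.mem_preimage, hS, Set.mem_setOf_eq, Set.mem_univ_pi, Set.mem_Iio, happ]
    constructor
    · intro h i
      have hi := h i.1 i.2
      rw [dif_pos i.2, dif_neg hzp] at hi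
      have h2 : (⟨i.1, i.2⟩ : {i // p i}) = i := rfl
      rw [h2] at hi
      linarith
    · intro h z' hz'
      rw [dif_pos hz', dif_neg hzp]
      have := h ⟨z', hz'⟩
      linarith
  have hg : ∀ t : ℝ,
      (∏ i : {i // p i}, ENNReal.ofReal (Real.exp (-Real.exp (-(U z + t - U i.1)))))
        = ENNReal.ofReal (Real.exp (-(c * Real.exp (-t)))) := by
    intro t
    rw [← ENNReal.ofReal_prod_of_nonneg (fun i _ => (Real.exp_pos _).le)]
    congr 1
    rw [← Real.exp_sum]
    congr 1
    have hsub : ∑ i : {i // p i}, -Real.exp (-(U z + t - U i.1))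
        = ∑ z' ∈ univ.erase z, -Real.exp (-(U z + t - U z')) :=
      (Finset.sum_subtype (p := p) (univ.erase z)
        (fun x => by simp [hp]) (fun z' => -Real.exp (-(U z + t - U z')))).symm
    rw [hsub, hc_def, Finset.sum_mul, ← Finset.sum_neg_distrib]
    refine Finset.sum_congr rfl fun z' _ => ?_
    rw [← Real.exp_add]
    ring_nf
  have hgm : Measurable fun t : ℝ => ENNReal.ofReal (Real.exp (-(c * Real.exp (-t)))) := by
    fun_prop
  have hTm : MeasurableSet (e.symm ⁻¹' S) := e.symm.measurable hSm
  rw [← key, Measure.prod_apply_symm hTm]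
  refine Eq.trans (lintegral_congr
      (g := fun y : {i // ¬ p i} → ℝ =>
        ENNReal.ofReal (Real.exp (-(c * Real.exp (-(y ⟨z, hzp⟩)))))) fun y => ?_) ?_
  · rw [hsec y, Measure.pi_pi]
    rw [Finset.prod_congr rfl fun i _ => gumbel_Iio ν hcdf (U z + y ⟨z, hzp⟩ - U i.1)]
    exact hg (y ⟨z, hzp⟩)
  · have hd : (⟨z, hzp⟩ : {i // ¬ p i}) = default := Subsingleton.elim _ _
    simp only [hd]
    refine Eq.trans ((measurePreserving_piUnique (fun _ : {i // ¬ p i} => ν)).lintegral_comp hgm) ?_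
    rw [gumbel_lintegral ν hcdf c hc0]
    congr 1
    have hsum : ∑ z', Real.exp (U z') = (c + 1) * Real.exp (U z) := by
      rw [hc_def, add_mul, one_mul, Finset.sum_mul]
      have h1 : ∀ z' : Z, Real.exp (U z' - U z) * Real.exp (U z) = Real.exp (U z') :=
        fun z' => by rw [← Real.exp_add]; ring_nf
      rw [Finset.sum_congr rfl fun z' _ => h1 z']
      exact (Finset.sum_erase_add univ _ (mem_univ z)).symm
    rw [hsum]
    have hc1 : (0:ℝ) < c + 1 := by linarith
    rw [eq_div_iff (by positivity)]
    field_simp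
end

section
/- Entropic social-welfare duality (Theorem 3(i)-(ii) in the Logit case): assume n x > 0 for all x and m y > 0 for all y. Define W(p) = ∑_x n x · log(1 + ∑_z exp(α x z + p z)) + ∑_y m y · log(1 + ∑_z exp(γ z y − p z)) for p : Z → ℝ. For a feasible flow (μˢ, μᵈ), set μ_{x0} = n x − ∑_z μˢ x z and μ_{0y} = m y − ∑_z μᵈ z y, and define the generalized entropy E(μˢ, μᵈ) = ∑_x (∑_z μˢ x z · log(μˢ x z / n x) + μ_{x0} · log(μ_{x0} / n x)) + ∑_y (∑_z μᵈ z y · log(μᵈ z y / m y) + μ_{0y} · log(μ_{0y} / m y)), with the convention 0 · log 0 = 0. Then the infimum of W over all p : Z → ℝ equals the supremum, over all feasible flows (μˢ, μᵈ), of ∑_{x,z} μˢ x z · α x z + ∑_{z,y} μᵈ z y · γ z y − E(μˢ, μᵈ). -/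
open Finset MeasureTheory Real

variable {X Y Z : Type*} [Fintype X] [Fintype Y] [Fintype Z]
  [Nonempty X] [Nonempty Y] [Nonempty Z]

/-- A pair of supply/demand functions is a feasible flow. -/
def FeasibleFlow (n : X → ℝ) (m : Y → ℝ) (μs : X → Z → ℝ) (μd : Z → Y → ℝ) : Prop :=
  (∀ x z, 0 ≤ μs x z) ∧ (∀ z y, 0 ≤ μd z y) ∧
    (∀ x, ∑ z, μs x z ≤ n x) ∧ (∀ y, ∑ z, μd z y ≤ m y) ∧
    (∀ z, ∑ x, μs x z = ∑ y, μd z y)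

/-- The dual welfare function over prices in the Logit specification. -/
noncomputable def Wlogit (n : X → ℝ) (m : Y → ℝ) (α : X → Z → ℝ) (γ : Z → Y → ℝ)
    (p : Z → ℝ) : ℝ :=
  (∑ x, n x * Real.log (1 + ∑ z, Real.exp (α x z + p z))) +
    ∑ y, m y * Real.log (1 + ∑ z, Real.exp (γ z y - p z))

/-- Generalized entropy of a flow in the Logit specification (note that in Lean
`0 * Real.log 0 = 0`, which implements the convention `0 · log 0 = 0`). -/
noncomputable def entropyE (n : X → ℝ) (m : Y → ℝ)
    (μs : X → Z → ℝ) (μd : Z → Y → ℝ) : ℝ :=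
  (∑ x, ((∑ z, μs x z * Real.log (μs x z / n x)) +
      (n x - ∑ z, μs x z) * Real.log ((n x - ∑ z, μs x z) / n x))) +
    ∑ y, ((∑ z, μd z y * Real.log (μd z y / m y)) +
      (m y - ∑ z, μd z y) * Real.log ((m y - ∑ z, μd z y) / m y))

/-- The entropic social welfare of a flow in the Logit specification. -/
noncomputable def entWelfare (n : X → ℝ) (m : Y → ℝ) (α : X → Z → ℝ) (γ : Z → Y → ℝ)
    (μs : X → Z → ℝ) (μd : Z → Y → ℝ) : ℝ :=
  (∑ x, ∑ z, μs x z * α x z) + (∑ z, ∑ y, μd z y * γ z y) - entropyE n m μs μd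

set_option linter.unusedSectionVars false


lemma key_term (n D a μz : ℝ) (hn : 0 < n) (hD : 0 < D) (h : 0 ≤ μz) :
    μz * a - μz * Real.log (μz / n) - μz * Real.log D ≤ n * Real.exp a / D - μz := by
  rcases eq_or_lt_of_le h with h0 | h0
  · simp [← h0]
    positivity
  · have hu : 0 < n * Real.exp a / (μz * D) := by positivity
    have hlog := Real.log_le_sub_one_of_pos hu
    have hlogeq : Real.log (n * Real.exp a / (μz * D)) =
        a - Real.log (μz / n) - Real.log D := by
      rw [Real.log_div (by positivity) (by positivity), Real.log_mul (ne_of_gt hn)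
        (Real.exp_ne_zero a), Real.log_exp, Real.log_mul (ne_of_gt h0) (ne_of_gt hD),
        Real.log_div (ne_of_gt h0) (ne_of_gt hn)]
      ring
    have := mul_le_mul_of_nonneg_left hlog h
    rw [hlogeq] at this
    have h2 : μz * (n * Real.exp a / (μz * D) - 1) = n * Real.exp a / D - μz := by
      field_simp
    nlinarith [this, h2]

lemma gibbs {Z : Type*} [Fintype Z] (n : ℝ) (hn : 0 < n) (a μ : Z → ℝ)
    (h0 : ∀ z, 0 ≤ μ z) (hle : ∑ z, μ z ≤ n) :
    (∑ z, μ z * a z) - ((∑ z, μ z * Real.log (μ z / n)) +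
      (n - ∑ z, μ z) * Real.log ((n - ∑ z, μ z) / n))
      ≤ n * Real.log (1 + ∑ z, Real.exp (a z)) := by
  set D : ℝ := 1 + ∑ z, Real.exp (a z) with hDdef
  have hD : 0 < D := by positivity
  have hterm : ∀ z : Z, μ z * a z - μ z * Real.log (μ z / n) - μ z * Real.log D ≤
      n * Real.exp (a z) / D - μ z := fun z => key_term n D (a z) (μ z) hn hD (h0 z)
  have hsum := Finset.sum_le_sum (fun z (_ : z ∈ Finset.univ) => hterm z)
  have h0term := key_term n D 0 (n - ∑ z, μ z) hn hD (by linarith)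
  rw [Real.exp_zero] at h0term
  have e1 : ∑ z, (μ z * a z - μ z * Real.log (μ z / n) - μ z * Real.log D) =
      (∑ z, μ z * a z) - (∑ z, μ z * Real.log (μ z / n)) - (∑ z, μ z) * Real.log D := by
    rw [Finset.sum_sub_distrib, Finset.sum_sub_distrib, ← Finset.sum_mul]
  have e2 : ∑ z, (n * Real.exp (a z) / D - μ z) =
      n * (∑ z, Real.exp (a z)) / D - ∑ z, μ z := by
    rw [Finset.sum_sub_distrib]
    congr 1
    rw [← Finset.sum_div, ← Finset.mul_sum]
  rw [e1, e2] at hsum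
  have hDsum : n * (∑ z, Real.exp (a z)) / D + n * 1 / D = n := by
    field_simp
    ring
  nlinarith [hsum, h0term, hDsum]

lemma sum_exp_pos' {Z : Type*} [Fintype Z] (f : Z → ℝ) : (0:ℝ) < 1 + ∑ z, Real.exp (f z) := by
  have : (0:ℝ) ≤ ∑ z, Real.exp (f z) := Finset.sum_nonneg fun z _ => (Real.exp_pos _).le
  linarith


lemma Wlogit_continuous (n : X → ℝ) (m : Y → ℝ) (α : X → Z → ℝ) (γ : Z → Y → ℝ) :
    Continuous (Wlogit n m α γ) := by
  unfold Wlogit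
  apply Continuous.add <;> apply continuous_finset_sum <;> intro i _
  · exact (continuous_const.mul ((continuous_const.add (continuous_finset_sum _
      fun z _ => ((continuous_const.add (continuous_apply z)).rexp))).log
      fun p => (sum_exp_pos' _).ne'))
  · exact (continuous_const.mul ((continuous_const.add (continuous_finset_sum _
      fun z _ => ((continuous_const.sub (continuous_apply z)).rexp))).log
      fun p => (sum_exp_pos' _).ne'))


lemma Wlogit_nonneg (n : X → ℝ) (m : Y → ℝ) (hn : ∀ x, 0 < n x) (hm : ∀ y, 0 < m y)
    (α : X → Z → ℝ) (γ : Z → Y → ℝ) (p : Z → ℝ) : 0 ≤ Wlogit n m α γ p := by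
  unfold Wlogit
  have h1 : ∀ x : X, (0:ℝ) ≤ n x * Real.log (1 + ∑ z, Real.exp (α x z + p z)) := by
    intro x
    apply mul_nonneg (hn x).le
    apply Real.log_nonneg
    have : (0:ℝ) ≤ ∑ z, Real.exp (α x z + p z) := Finset.sum_nonneg fun z _ => (Real.exp_pos _).le
    linarith
  have h2 : ∀ y : Y, (0:ℝ) ≤ m y * Real.log (1 + ∑ z, Real.exp (γ z y - p z)) := by
    intro y
    apply mul_nonneg (hm y).le
    apply Real.log_nonneg
    have : (0:ℝ) ≤ ∑ z, Real.exp (γ z y - p z) := Finset.sum_nonneg fun z _ => (Real.exp_pos _).le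
    linarith
  have := Finset.sum_nonneg fun x (_ : x ∈ Finset.univ) => h1 x
  have := Finset.sum_nonneg fun y (_ : y ∈ Finset.univ) => h2 y
  linarith


lemma exists_min (n : X → ℝ) (m : Y → ℝ) (hn : ∀ x, 0 < n x) (hm : ∀ y, 0 < m y)
    (α : X → Z → ℝ) (γ : Z → Y → ℝ) :
    ∃ p : Z → ℝ, ∀ q, Wlogit n m α γ p ≤ Wlogit n m α γ q := by
  classical
  obtain ⟨x0⟩ := ‹Nonempty X›
  obtain ⟨y0⟩ := ‹Nonempty Y›
  set c : ℝ := min (n x0) (m y0) with hc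
  have hc0 : 0 < c := lt_min (hn x0) (hm y0)
  set A : ℝ := Finset.univ.sup' Finset.univ_nonempty (fun z : Z => max |α x0 z| |γ z y0|) with hA
  have hA0 : 0 ≤ A := by
    obtain ⟨z⟩ := ‹Nonempty Z›
    calc (0:ℝ) ≤ max |α x0 z| |γ z y0| := le_max_iff.2 (Or.inl (abs_nonneg _))
      _ ≤ A := by exact Finset.le_sup' (fun z : Z => max |α x0 z| |γ z y0|) (Finset.mem_univ z)
  -- per-coordinate lower bound
  have hbound : ∀ (p : Z → ℝ) (z : Z), c * (|p z| - A) ≤ Wlogit n m α γ p := by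
    intro p z
    rcases le_or_gt (|p z|) A with h | h
    · have : c * (|p z| - A) ≤ 0 := mul_nonpos_of_nonneg_of_nonpos hc0.le (by linarith)
      exact this.trans (Wlogit_nonneg n m hn hm α γ p)
    · have hαz : -A ≤ α x0 z := by
        have hz : max |α x0 z| |γ z y0| ≤ A := by
          exact Finset.le_sup' (fun z : Z => max |α x0 z| |γ z y0|) (Finset.mem_univ z)
        have h1 : |α x0 z| ≤ A := le_trans (le_max_left _ _) hz
        have := abs_le.1 h1
        linarith [this.1]
      have hγz : -A ≤ γ z y0 := by
        have hz : max |α x0 z| |γ z y0| ≤ A := by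
          exact Finset.le_sup' (fun z : Z => max |α x0 z| |γ z y0|) (Finset.mem_univ z)
        have h1 : |γ z y0| ≤ A := le_trans (le_max_right _ _) hz
        have := abs_le.1 h1
        linarith [(abs_le.1 h1).1]
      rcases le_or_gt 0 (p z) with hpz | hpz
      · -- use producer x0 term
        have hterm : n x0 * (|p z| - A) ≤ n x0 * Real.log (1 + ∑ z', Real.exp (α x0 z' + p z')) := by
          apply mul_le_mul_of_nonneg_left _ (hn x0).le
          rw [abs_of_nonneg hpz]
          have hle : Real.exp (α x0 z + p z) ≤ 1 + ∑ z', Real.exp (α x0 z' + p z') := by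
            have := Finset.single_le_sum (f := fun z' => Real.exp (α x0 z' + p z'))
              (fun z' _ => (Real.exp_pos _).le) (Finset.mem_univ z)
            linarith
          have := (Real.le_log_iff_exp_le (sum_exp_pos' fun z' => α x0 z' + p z')).2
            (Real.exp_le_exp.2 (by linarith : p z - A ≤ α x0 z + p z) |>.trans hle)
          linarith
        have hrest : 0 ≤ (∑ x ∈ Finset.univ.erase x0, n x * Real.log (1 + ∑ z', Real.exp (α x z' + p z'))) +
            ∑ y, m y * Real.log (1 + ∑ z', Real.exp (γ z' y - p z')) := by
          apply add_nonneg
          · apply Finset.sum_nonneg; intro x _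
            apply mul_nonneg (hn x).le
            apply Real.log_nonneg
            have : (0:ℝ) ≤ ∑ z', Real.exp (α x z' + p z') := Finset.sum_nonneg fun _ _ => (Real.exp_pos _).le
            linarith
          · apply Finset.sum_nonneg; intro y _
            apply mul_nonneg (hm y).le
            apply Real.log_nonneg
            have : (0:ℝ) ≤ ∑ z', Real.exp (γ z' y - p z') := Finset.sum_nonneg fun _ _ => (Real.exp_pos _).le
            linarith
        have hsplit : Wlogit n m α γ p = n x0 * Real.log (1 + ∑ z', Real.exp (α x0 z' + p z')) +
            ((∑ x ∈ Finset.univ.erase x0, n x * Real.log (1 + ∑ z', Real.exp (α x z' + p z'))) +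
              ∑ y, m y * Real.log (1 + ∑ z', Real.exp (γ z' y - p z'))) := by
          unfold Wlogit
          rw [← Finset.add_sum_erase _ _ (Finset.mem_univ x0)]
          ring
        have hcmul : c * (|p z| - A) ≤ n x0 * (|p z| - A) := by
          apply mul_le_mul_of_nonneg_right (min_le_left _ _)
          linarith
        linarith
      · -- use consumer y0 term
        have hterm : m y0 * (|p z| - A) ≤ m y0 * Real.log (1 + ∑ z', Real.exp (γ z' y0 - p z')) := by
          apply mul_le_mul_of_nonneg_left _ (hm y0).le
          rw [abs_of_neg hpz]
          have hle : Real.exp (γ z y0 - p z) ≤ 1 + ∑ z', Real.exp (γ z' y0 - p z') := by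
            have := Finset.single_le_sum (f := fun z' => Real.exp (γ z' y0 - p z'))
              (fun z' _ => (Real.exp_pos _).le) (Finset.mem_univ z)
            linarith
          have := (Real.le_log_iff_exp_le (sum_exp_pos' fun z' => γ z' y0 - p z')).2
            (Real.exp_le_exp.2 (by linarith : -p z - A ≤ γ z y0 - p z) |>.trans hle)
          linarith
        have hrest : 0 ≤ (∑ x, n x * Real.log (1 + ∑ z', Real.exp (α x z' + p z'))) +
            ∑ y ∈ Finset.univ.erase y0, m y * Real.log (1 + ∑ z', Real.exp (γ z' y - p z')) := by
          apply add_nonneg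
          · apply Finset.sum_nonneg; intro x _
            apply mul_nonneg (hn x).le
            apply Real.log_nonneg
            have : (0:ℝ) ≤ ∑ z', Real.exp (α x z' + p z') := Finset.sum_nonneg fun _ _ => (Real.exp_pos _).le
            linarith
          · apply Finset.sum_nonneg; intro y _
            apply mul_nonneg (hm y).le
            apply Real.log_nonneg
            have : (0:ℝ) ≤ ∑ z', Real.exp (γ z' y - p z') := Finset.sum_nonneg fun _ _ => (Real.exp_pos _).le
            linarith
        have hsplit : Wlogit n m α γ p = m y0 * Real.log (1 + ∑ z', Real.exp (γ z' y0 - p z')) +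
            ((∑ x, n x * Real.log (1 + ∑ z', Real.exp (α x z' + p z'))) +
              ∑ y ∈ Finset.univ.erase y0, m y * Real.log (1 + ∑ z', Real.exp (γ z' y - p z'))) := by
          unfold Wlogit
          rw [← Finset.add_sum_erase _ _ (Finset.mem_univ y0)]
          ring
        have hcmul : c * (|p z| - A) ≤ m y0 * (|p z| - A) := by
          apply mul_le_mul_of_nonneg_right (min_le_right _ _)
          linarith
        linarith
  -- norm lower bound
  have hnorm : ∀ p : Z → ℝ, c * ‖p‖ - c * A ≤ Wlogit n m α γ p := by
    intro p
    have hr : (0:ℝ) ≤ (Wlogit n m α γ p + c * A) / c := by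
      have := Wlogit_nonneg n m hn hm α γ p
      positivity
    have : ‖p‖ ≤ (Wlogit n m α γ p + c * A) / c := by
      rw [pi_norm_le_iff_of_nonneg hr]
      intro z
      rw [Real.norm_eq_abs, le_div_iff₀ hc0]
      have := hbound p z
      nlinarith [hbound p z]
    have := (mul_le_mul_of_nonneg_left this hc0.le)
    rw [mul_div_cancel₀ _ hc0.ne'] at this
    linarith
  -- coercivity
  have hcoer : Filter.Tendsto (Wlogit n m α γ) (Filter.cocompact (Z → ℝ)) Filter.atTop := by
    apply Filter.tendsto_atTop_mono hnorm
    have h1 : Filter.Tendsto (fun p : Z → ℝ => c * ‖p‖) (Filter.cocompact (Z → ℝ)) Filter.atTop :=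
      (tendsto_norm_cocompact_atTop).const_mul_atTop hc0
    exact Filter.tendsto_atTop_add_const_right _ _ h1
  exact (Wlogit_continuous n m α γ).exists_forall_le hcoer


lemma foc (n : X → ℝ) (m : Y → ℝ) (α : X → Z → ℝ) (γ : Z → Y → ℝ) (p : Z → ℝ)
    (hmin : ∀ q, Wlogit n m α γ p ≤ Wlogit n m α γ q) (z0 : Z) :
    ∑ x, n x * (Real.exp (α x z0 + p z0) / (1 + ∑ z, Real.exp (α x z + p z))) =
      ∑ y, m y * (Real.exp (γ z0 y - p z0) / (1 + ∑ z, Real.exp (γ z y - p z))) := by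
  classical
  set t0 := p z0 with ht0
  -- derivative of the inner producer sum
  have hS : ∀ (x : X) (t : ℝ),
      HasDerivAt (fun s => ∑ z, Real.exp (α x z + Function.update p z0 s z))
        (Real.exp (α x z0 + t)) t := by
    intro x t
    have h : ∀ z ∈ Finset.univ, HasDerivAt
        (fun s => Real.exp (α x z + Function.update p z0 s z))
        (if z = z0 then Real.exp (α x z0 + t) else 0) t := by
      intro z _
      by_cases h : z = z0
      · subst h
        simp only [Function.update_self, if_pos rfl]
        have := ((hasDerivAt_id t).const_add (α x z)).exp
        simpa using this
      · simp only [Function.update_of_ne h, if_neg h]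
        exact hasDerivAt_const t _
    have := HasDerivAt.fun_sum h
    simpa using this
  have hT : ∀ (y : Y) (t : ℝ),
      HasDerivAt (fun s => ∑ z, Real.exp (γ z y - Function.update p z0 s z))
        (-Real.exp (γ z0 y - t)) t := by
    intro y t
    have h : ∀ z ∈ Finset.univ, HasDerivAt
        (fun s => Real.exp (γ z y - Function.update p z0 s z))
        (if z = z0 then -Real.exp (γ z0 y - t) else 0) t := by
      intro z _
      by_cases h : z = z0
      · subst h
        simp only [Function.update_self, if_pos rfl]
        have := ((hasDerivAt_id t).const_sub (γ z y)).exp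
        simpa using this
      · simp only [Function.update_of_ne h, if_neg h]
        exact hasDerivAt_const t _
    have := HasDerivAt.fun_sum h
    simpa using this
  -- derivative of W ∘ update at t0
  have hW : HasDerivAt (fun s => Wlogit n m α γ (Function.update p z0 s))
      ((∑ x, n x * (Real.exp (α x z0 + t0) / (1 + ∑ z, Real.exp (α x z + p z)))) +
        ∑ y, m y * (-Real.exp (γ z0 y - t0) / (1 + ∑ z, Real.exp (γ z y - p z)))) t0 := by
    have hA : HasDerivAt (fun s => ∑ x, n x *
        Real.log (1 + ∑ z, Real.exp (α x z + Function.update p z0 s z)))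
        (∑ x, n x * (Real.exp (α x z0 + t0) / (1 + ∑ z, Real.exp (α x z + p z)))) t0 := by
      apply HasDerivAt.fun_sum
      intro x _
      have h1 : HasDerivAt (fun s => 1 + ∑ z, Real.exp (α x z + Function.update p z0 s z))
          (Real.exp (α x z0 + t0)) t0 := by simpa using (hasDerivAt_const t0 (1:ℝ)).fun_add (hS x t0)
      have h2 := h1.log ?_
      · have h3 := h2.const_mul (n x)
        rw [show Function.update p z0 t0 = p from by rw [ht0]; exact Function.update_eq_self z0 p] at h3
        exact h3
      · rw [show Function.update p z0 t0 = p from by rw [ht0]; exact Function.update_eq_self z0 p]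
        exact (sum_exp_pos' _).ne'
    have hB : HasDerivAt (fun s => ∑ y, m y *
        Real.log (1 + ∑ z, Real.exp (γ z y - Function.update p z0 s z)))
        (∑ y, m y * (-Real.exp (γ z0 y - t0) / (1 + ∑ z, Real.exp (γ z y - p z)))) t0 := by
      apply HasDerivAt.fun_sum
      intro y _
      have h1 : HasDerivAt (fun s => 1 + ∑ z, Real.exp (γ z y - Function.update p z0 s z))
          (-Real.exp (γ z0 y - t0)) t0 := by simpa using (hasDerivAt_const t0 (1:ℝ)).fun_add (hT y t0)
      have h2 := h1.log ?_
      · have h3 := h2.const_mul (m y)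
        rw [show Function.update p z0 t0 = p from by rw [ht0]; exact Function.update_eq_self z0 p] at h3
        exact h3
      · rw [show Function.update p z0 t0 = p from by rw [ht0]; exact Function.update_eq_self z0 p]
        exact (sum_exp_pos' _).ne'
    exact hA.add hB
  have hlocmin : IsLocalMin (fun s => Wlogit n m α γ (Function.update p z0 s)) t0 := by
    apply Filter.Eventually.of_forall
    intro s
    simpa [ht0, Function.update_eq_self] using hmin (Function.update p z0 s)
  have hzero := hlocmin.hasDerivAt_eq_zero hW
  have : ∑ y, m y * (-Real.exp (γ z0 y - t0) / (1 + ∑ z, Real.exp (γ z y - p z))) =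
      -∑ y, m y * (Real.exp (γ z0 y - t0) / (1 + ∑ z, Real.exp (γ z y - p z))) := by
    rw [← Finset.sum_neg_distrib]
    exact Finset.sum_congr rfl fun y _ => by ring
  rw [this] at hzero
  linarith [hzero]


-- rewriting entWelfare using prices, given market clearing
lemma entWelfare_eq_price (n : X → ℝ) (m : Y → ℝ) (α : X → Z → ℝ) (γ : Z → Y → ℝ)
    (μs : X → Z → ℝ) (μd : Z → Y → ℝ) (p : Z → ℝ)
    (hclear : ∀ z, ∑ x, μs x z = ∑ y, μd z y) :
    entWelfare n m α γ μs μd =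
      (∑ x, ((∑ z, μs x z * (α x z + p z)) -
        ((∑ z, μs x z * Real.log (μs x z / n x)) +
          (n x - ∑ z, μs x z) * Real.log ((n x - ∑ z, μs x z) / n x)))) +
      ∑ y, ((∑ z, μd z y * (γ z y - p z)) -
        ((∑ z, μd z y * Real.log (μd z y / m y)) +
          (m y - ∑ z, μd z y) * Real.log ((m y - ∑ z, μd z y) / m y))) := by
  have hp : ∑ z, (∑ x, μs x z) * p z = ∑ z, (∑ y, μd z y) * p z :=
    Finset.sum_congr rfl fun z _ => by rw [hclear z]
  have e1 : ∑ x, ∑ z, μs x z * (α x z + p z) =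
      (∑ x, ∑ z, μs x z * α x z) + ∑ z, (∑ x, μs x z) * p z := by
    simp only [mul_add, Finset.sum_add_distrib]
    congr 1
    rw [Finset.sum_comm]
    exact Finset.sum_congr rfl fun z _ => (Finset.sum_mul ..).symm
  have e2 : ∑ y, ∑ z, μd z y * (γ z y - p z) =
      (∑ y, ∑ z, μd z y * γ z y) - ∑ z, (∑ y, μd z y) * p z := by
    simp only [mul_sub, Finset.sum_sub_distrib]
    congr 1
    rw [Finset.sum_comm]
    exact Finset.sum_congr rfl fun z _ => (Finset.sum_mul ..).symm
  have e3 : ∑ z, ∑ y, μd z y * γ z y = ∑ y, ∑ z, μd z y * γ z y := Finset.sum_comm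
  rw [Finset.sum_sub_distrib, Finset.sum_sub_distrib, e1, e2, entWelfare, entropyE, e3]
  linarith [hp]

lemma weak_duality (n : X → ℝ) (m : Y → ℝ) (hn : ∀ x, 0 < n x) (hm : ∀ y, 0 < m y)
    (α : X → Z → ℝ) (γ : Z → Y → ℝ) (μs : X → Z → ℝ) (μd : Z → Y → ℝ)
    (hf : FeasibleFlow n m μs μd) (p : Z → ℝ) :
    entWelfare n m α γ μs μd ≤ Wlogit n m α γ p := by
  obtain ⟨hs0, hd0, hsle, hdle, hclear⟩ := hf
  rw [entWelfare_eq_price n m α γ μs μd p hclear, Wlogit]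
  gcongr with x _ y _
  · exact gibbs (n x) (hn x) (fun z => α x z + p z) (μs x) (hs0 x) (hsle x)
  · exact gibbs (m y) (hm y) (fun z => γ z y - p z) (fun z => μd z y) (fun z => hd0 z y) (hdle y)


/-- The Gibbs inequality holds with equality at the logit flow. -/
lemma logit_gibbs_eq {Z : Type*} [Fintype Z] (n : ℝ) (hn : 0 < n) (a : Z → ℝ) :
    (∑ z, (n * (Real.exp (a z) / (1 + ∑ z', Real.exp (a z')))) * a z) -
      ((∑ z, (n * (Real.exp (a z) / (1 + ∑ z', Real.exp (a z')))) *
          Real.log ((n * (Real.exp (a z) / (1 + ∑ z', Real.exp (a z')))) / n)) +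
        (n - ∑ z, n * (Real.exp (a z) / (1 + ∑ z', Real.exp (a z')))) *
          Real.log ((n - ∑ z, n * (Real.exp (a z) / (1 + ∑ z', Real.exp (a z')))) / n))
      = n * Real.log (1 + ∑ z', Real.exp (a z')) := by
  set D : ℝ := 1 + ∑ z', Real.exp (a z') with hDdef
  have hD : 0 < D := sum_exp_pos' a
  have hsum : ∑ z, n * (Real.exp (a z) / D) = n - n / D := by
    rw [← Finset.mul_sum, ← Finset.sum_div]
    field_simp [hDdef]
    ring
  have hrem : n - ∑ z, n * (Real.exp (a z) / D) = n / D := by rw [hsum]; ring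
  have hlograt : ∀ z : Z, Real.log ((n * (Real.exp (a z) / D)) / n) = a z - Real.log D := by
    intro z
    have : (n * (Real.exp (a z) / D)) / n = Real.exp (a z) / D := by
      field_simp
    rw [this, Real.log_div (Real.exp_ne_zero _) hD.ne', Real.log_exp]
  have hlog0 : Real.log ((n / D) / n) = -Real.log D := by
    have : (n / D) / n = D⁻¹ := by field_simp
    rw [this, Real.log_inv]
  rw [hrem, hlog0]
  have e1 : ∑ z, (n * (Real.exp (a z) / D)) * Real.log ((n * (Real.exp (a z) / D)) / n) =
      ∑ z, ((n * (Real.exp (a z) / D)) * a z - (n * (Real.exp (a z) / D)) * Real.log D) := by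
    refine Finset.sum_congr rfl fun z _ => ?_
    rw [hlograt z]; ring
  rw [e1, Finset.sum_sub_distrib, ← Finset.sum_mul, hsum]
  ring

/-- Theorem 3(i)-(ii) in the Logit case: entropic social-welfare duality. -/
theorem entropic_welfare_duality (n : X → ℝ) (m : Y → ℝ)
    (hn : ∀ x, 0 < n x) (hm : ∀ y, 0 < m y) (α : X → Z → ℝ) (γ : Z → Y → ℝ) :
    sInf {w : ℝ | ∃ p : Z → ℝ, w = Wlogit n m α γ p} =
      sSup {s : ℝ | ∃ (μs : X → Z → ℝ) (μd : Z → Y → ℝ), FeasibleFlow n m μs μd ∧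
        s = entWelfare n m α γ μs μd} := by
  classical
  obtain ⟨p, hmin⟩ := exists_min n m hn hm α γ
  -- the optimal logit flow
  set μs : X → Z → ℝ := fun x z => n x * (Real.exp (α x z + p z) /
    (1 + ∑ z', Real.exp (α x z' + p z'))) with hμs
  set μd : Z → Y → ℝ := fun z y => m y * (Real.exp (γ z y - p z) /
    (1 + ∑ z', Real.exp (γ z' y - p z'))) with hμd
  have hsumS : ∀ x, ∑ z, μs x z = n x - n x / (1 + ∑ z', Real.exp (α x z' + p z')) := by
    intro x
    rw [hμs]
    simp only
    rw [← Finset.mul_sum, ← Finset.sum_div]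
    have hD := sum_exp_pos' (fun z' => α x z' + p z')
    field_simp
    ring
  have hsumD : ∀ y, ∑ z, μd z y = m y - m y / (1 + ∑ z', Real.exp (γ z' y - p z')) := by
    intro y
    rw [hμd]
    simp only
    rw [← Finset.mul_sum, ← Finset.sum_div]
    have hD := sum_exp_pos' (fun z' => γ z' y - p z')
    field_simp
    ring
  have hclear : ∀ z, ∑ x, μs x z = ∑ y, μd z y := fun z => foc n m α γ p hmin z
  have hfeas : FeasibleFlow n m μs μd := by
    refine ⟨fun x z => mul_nonneg (hn x).le (div_nonneg (Real.exp_pos _).le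
      (sum_exp_pos' (fun z' => α x z' + p z')).le),
      fun z y => mul_nonneg (hm y).le (div_nonneg (Real.exp_pos _).le
      (sum_exp_pos' (fun z' => γ z' y - p z')).le), ?_, ?_, hclear⟩
    · intro x
      rw [hsumS x]
      have hD := sum_exp_pos' (fun z' => α x z' + p z')
      have : 0 < n x / (1 + ∑ z', Real.exp (α x z' + p z')) := div_pos (hn x) hD
      linarith
    · intro y
      rw [hsumD y]
      have hD := sum_exp_pos' (fun z' => γ z' y - p z')
      have : 0 < m y / (1 + ∑ z', Real.exp (γ z' y - p z')) := div_pos (hm y) hD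
      linarith
  have heq : entWelfare n m α γ μs μd = Wlogit n m α γ p := by
    rw [entWelfare_eq_price n m α γ μs μd p hclear, Wlogit]
    congr 1
    · refine Finset.sum_congr rfl fun x _ => ?_
      exact logit_gibbs_eq (n x) (hn x) (fun z => α x z + p z)
    · refine Finset.sum_congr rfl fun y _ => ?_
      exact logit_gibbs_eq (m y) (hm y) (fun z => γ z y - p z)
  -- conclude
  have hmemInf : Wlogit n m α γ p ∈ {w : ℝ | ∃ q : Z → ℝ, w = Wlogit n m α γ q} := ⟨p, rfl⟩
  have hlb : ∀ w ∈ {w : ℝ | ∃ q : Z → ℝ, w = Wlogit n m α γ q}, Wlogit n m α γ p ≤ w := by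
    rintro w ⟨q, rfl⟩
    exact hmin q
  have hmemSup : entWelfare n m α γ μs μd ∈ {s : ℝ | ∃ (μs' : X → Z → ℝ) (μd' : Z → Y → ℝ),
      FeasibleFlow n m μs' μd' ∧ s = entWelfare n m α γ μs' μd'} := ⟨μs, μd, hfeas, rfl⟩
  have hub : ∀ s ∈ {s : ℝ | ∃ (μs' : X → Z → ℝ) (μd' : Z → Y → ℝ),
      FeasibleFlow n m μs' μd' ∧ s = entWelfare n m α γ μs' μd'}, s ≤ Wlogit n m α γ p := by
    rintro s ⟨μs', μd', hf, rfl⟩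
    exact weak_duality n m hn hm α γ μs' μd' hf p
  have h1 : sInf {w : ℝ | ∃ q : Z → ℝ, w = Wlogit n m α γ q} = Wlogit n m α γ p :=
    le_antisymm (csInf_le ⟨Wlogit n m α γ p, hlb⟩ hmemInf) (le_csInf ⟨_, hmemInf⟩ hlb)
  have h2 : sSup {s : ℝ | ∃ (μs' : X → Z → ℝ) (μd' : Z → Y → ℝ),
      FeasibleFlow n m μs' μd' ∧ s = entWelfare n m α γ μs' μd'} = Wlogit n m α γ p := by
    refine le_antisymm (csSup_le ⟨_, hmemSup⟩ hub) ?_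
    rw [← heq]
    exact le_csSup ⟨Wlogit n m α γ p, hub⟩ hmemSup
  rw [h1, h2]
end

section
/- Existence of equilibrium prices in the Logit case (part of Theorem 3(iii)): assume n x > 0 for all x and m y > 0 for all y. Then the function W(p) = ∑_x n x · log(1 + ∑_z exp(α x z + p z)) + ∑_y m y · log(1 + ∑_z exp(γ z y − p z)) attains its infimum over p : Z → ℝ, i.e., there exists an equilibrium price vector p* with W(p*) ≤ W(p) for all p : Z → ℝ. -/
open Finset MeasureTheory Real

variable {X Y Z : Type*} [Fintype X] [Fintype Y] [Fintype Z]
  [Nonempty X] [Nonempty Y] [Nonempty Z]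

/-- Part of Theorem 3(iii): existence of equilibrium prices in the Logit case. -/
theorem logit_equilibrium_prices_exist (n : X → ℝ) (m : Y → ℝ)
    (hn : ∀ x, 0 < n x) (hm : ∀ y, 0 < m y) (α : X → Z → ℝ) (γ : Z → Y → ℝ) :
    ∃ p₀ : Z → ℝ, ∀ p : Z → ℝ, Wlogit n m α γ p₀ ≤ Wlogit n m α γ p := by
  classical
  obtain ⟨q0, hq0⟩ := Finite.exists_min (fun q : (X × Z) ⊕ (Z × Y) =>
    Sum.elim (fun q => α q.1 q.2) (fun q => γ q.1 q.2) q)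
  set K := Sum.elim (fun q : X × Z => α q.1 q.2) (fun q : Z × Y => γ q.1 q.2) q0 with hKdef
  obtain ⟨c0, hc0⟩ := Finite.exists_min (Sum.elim n m : X ⊕ Y → ℝ)
  set c := Sum.elim n m c0 with hcdef
  have hc : 0 < c := by
    rcases c0 with x | y
    · exact hn x
    · exact hm y
  have hKα : ∀ x z, K ≤ α x z := fun x z => hq0 (Sum.inl (x, z))
  have hKγ : ∀ z y, K ≤ γ z y := fun z y => hq0 (Sum.inr (z, y))
  have hcn : ∀ x, c ≤ n x := fun x => hc0 (Sum.inl x)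
  have hcm : ∀ y, c ≤ m y := fun y => hc0 (Sum.inr y)
  -- each term of W is nonnegative
  have hterm1 : ∀ (p : Z → ℝ) (x : X),
      0 ≤ n x * Real.log (1 + ∑ z, Real.exp (α x z + p z)) := by
    intro p x
    refine mul_nonneg (hn x).le (Real.log_nonneg ?_)
    have : 0 ≤ ∑ z, Real.exp (α x z + p z) := by positivity
    linarith
  have hterm2 : ∀ (p : Z → ℝ) (y : Y),
      0 ≤ m y * Real.log (1 + ∑ z, Real.exp (γ z y - p z)) := by
    intro p y
    refine mul_nonneg (hm y).le (Real.log_nonneg ?_)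
    have : 0 ≤ ∑ z, Real.exp (γ z y - p z) := by positivity
    linarith
  have hW0 : ∀ p : Z → ℝ, 0 ≤ Wlogit n m α γ p := by
    intro p
    unfold Wlogit
    have h1 : 0 ≤ ∑ x, n x * Real.log (1 + ∑ z, Real.exp (α x z + p z)) :=
      Finset.sum_nonneg fun x _ => hterm1 p x
    have h2 : 0 ≤ ∑ y, m y * Real.log (1 + ∑ z, Real.exp (γ z y - p z)) :=
      Finset.sum_nonneg fun y _ => hterm2 p y
    linarith
  -- key lower bound
  have hbound : ∀ p : Z → ℝ, c * (‖p‖ + K) ≤ Wlogit n m α γ p := by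
    intro p
    rcases le_or_gt (‖p‖ + K) 0 with h | h
    · calc c * (‖p‖ + K) ≤ 0 := mul_nonpos_of_nonneg_of_nonpos hc.le h
        _ ≤ Wlogit n m α γ p := hW0 p
    · obtain ⟨z, hz⟩ := Finite.exists_max fun z => |p z|
      have hnormle : ‖p‖ ≤ |p z| := by
        refine (pi_norm_le_iff_of_nonneg (abs_nonneg _)).2 fun z' => ?_
        simpa [Real.norm_eq_abs] using hz z'
      rcases le_or_gt 0 (p z) with hpz | hpz
      · -- producer side
        have hpz' : ‖p‖ ≤ p z := by rwa [abs_of_nonneg hpz] at hnormle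
        set x₀ := Classical.arbitrary X
        have hexp : Real.exp (α x₀ z + p z) ≤ 1 + ∑ z', Real.exp (α x₀ z' + p z') := by
          have h1 : Real.exp (α x₀ z + p z) ≤ ∑ z', Real.exp (α x₀ z' + p z') :=
            Finset.single_le_sum (f := fun z' => Real.exp (α x₀ z' + p z'))
              (fun z' _ => (Real.exp_pos _).le) (Finset.mem_univ z)
          linarith
        have hlog : α x₀ z + p z ≤ Real.log (1 + ∑ z', Real.exp (α x₀ z' + p z')) := by
          have hpos : (0 : ℝ) < 1 + ∑ z', Real.exp (α x₀ z' + p z') := by positivity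
          exact (Real.le_log_iff_exp_le hpos).2 hexp
        have hmul : c * (‖p‖ + K) ≤ n x₀ * (α x₀ z + p z) := by
          refine mul_le_mul (hcn x₀) ?_ h.le (hn x₀).le
          have := hKα x₀ z
          linarith
        have hsum : n x₀ * Real.log (1 + ∑ z', Real.exp (α x₀ z' + p z')) ≤
            ∑ x, n x * Real.log (1 + ∑ z', Real.exp (α x z' + p z')) :=
          Finset.single_le_sum (fun x _ => hterm1 p x) (Finset.mem_univ x₀)
        have h2 : 0 ≤ ∑ y, m y * Real.log (1 + ∑ z', Real.exp (γ z' y - p z')) :=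
          Finset.sum_nonneg fun y _ => hterm2 p y
        have hmul2 : n x₀ * (α x₀ z + p z) ≤
            n x₀ * Real.log (1 + ∑ z', Real.exp (α x₀ z' + p z')) :=
          mul_le_mul_of_nonneg_left hlog (hn x₀).le
        unfold Wlogit
        linarith
      · -- consumer side
        have hpz' : ‖p‖ ≤ -p z := by rwa [abs_of_neg hpz] at hnormle
        set y₀ := Classical.arbitrary Y
        have hexp : Real.exp (γ z y₀ - p z) ≤ 1 + ∑ z', Real.exp (γ z' y₀ - p z') := by
          have h1 : Real.exp (γ z y₀ - p z) ≤ ∑ z', Real.exp (γ z' y₀ - p z') :=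
            Finset.single_le_sum (f := fun z' => Real.exp (γ z' y₀ - p z'))
              (fun z' _ => (Real.exp_pos _).le) (Finset.mem_univ z)
          linarith
        have hlog : γ z y₀ - p z ≤ Real.log (1 + ∑ z', Real.exp (γ z' y₀ - p z')) := by
          have hpos : (0 : ℝ) < 1 + ∑ z', Real.exp (γ z' y₀ - p z') := by positivity
          exact (Real.le_log_iff_exp_le hpos).2 hexp
        have hmul : c * (‖p‖ + K) ≤ m y₀ * (γ z y₀ - p z) := by
          refine mul_le_mul (hcm y₀) ?_ h.le (hm y₀).le
          have := hKγ z y₀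
          linarith
        have hsum : m y₀ * Real.log (1 + ∑ z', Real.exp (γ z' y₀ - p z')) ≤
            ∑ y, m y * Real.log (1 + ∑ z', Real.exp (γ z' y - p z')) :=
          Finset.single_le_sum (fun y _ => hterm2 p y) (Finset.mem_univ y₀)
        have h1 : 0 ≤ ∑ x, n x * Real.log (1 + ∑ z', Real.exp (α x z' + p z')) :=
          Finset.sum_nonneg fun x _ => hterm1 p x
        have hmul2 : m y₀ * (γ z y₀ - p z) ≤
            m y₀ * Real.log (1 + ∑ z', Real.exp (γ z' y₀ - p z')) :=
          mul_le_mul_of_nonneg_left hlog (hm y₀).le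
        unfold Wlogit
        linarith
  -- continuity
  have hW_cont : Continuous (Wlogit n m α γ) := by
    unfold Wlogit
    refine Continuous.add ?_ ?_
    · refine continuous_finset_sum _ fun x _ => Continuous.mul continuous_const ?_
      refine Continuous.log
        (continuous_const.add (continuous_finset_sum _ fun z _ =>
          ((continuous_const.add (continuous_apply z)).rexp))) fun p => ?_
      have : (0 : ℝ) < 1 + ∑ z, Real.exp (α x z + p z) := by positivity
      exact this.ne'
    · refine continuous_finset_sum _ fun y _ => Continuous.mul continuous_const ?_
      refine Continuous.log
        (continuous_const.add (continuous_finset_sum _ fun z _ =>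
          ((continuous_const.sub (continuous_apply z)).rexp))) fun p => ?_
      have : (0 : ℝ) < 1 + ∑ z, Real.exp (γ z y - p z) := by positivity
      exact this.ne'
  -- coercivity
  have hW_coer : Filter.Tendsto (Wlogit n m α γ) (Filter.cocompact _) Filter.atTop := by
    refine Filter.tendsto_atTop_mono hbound ?_
    exact (Filter.tendsto_atTop_add_const_right _ K
      tendsto_norm_cocompact_atTop).const_mul_atTop hc
  exact hW_cont.exists_forall_le hW_coer
end
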